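/- With L_1 and L̃_1 as in Bérenger's splitting and τ ≠ 0: the kernel of L̃_1(τ,ξ)* consists exactly of vectors (Φ,Φ,...,Φ) with Φ ∈ Ker L_1(τ,ξ)*, and the range of L̃_1(τ,ξ) equals the set of (Ψ_1,...,Ψ_d) such that ⟨Σ_j Ψ_j, Φ⟩ = 0 for all Φ ∈ Ker L_1(τ,ξ)*. -/

import Mathlib

open Matrix

lemma aux_range_mulVec_iff {n : Type*} [Fintype n] [DecidableEq n]
    (M : Matrix n n ℂ) (Ψ : n → ℂ) :
    (∃ X, M.mulVec X = Ψ) ↔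
      ∀ Φ : n → ℂ, Mᴴ.mulVec Φ = 0 → ∑ i, Ψ i * star (Φ i) = 0 := by
  constructor
  · rintro ⟨X, rfl⟩ Φ hΦ
    have key : ∑ i, (M.mulVec X) i * star (Φ i)
        = ∑ j, X j * star ((Mᴴ.mulVec Φ) j) := by
      simp only [Matrix.mulVec, dotProduct, Matrix.conjTranspose_apply,
        star_sum, star_mul', star_star, Finset.sum_mul, Finset.mul_sum]
      rw [Finset.sum_comm]
      exact Finset.sum_congr rfl fun i _ => Finset.sum_congr rfl fun j _ => by
        simp [star_mul', star_star]; ring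
    rw [key, hΦ]
    simp
  · intro h
    set T : EuclideanSpace ℂ n →ₗ[ℂ] EuclideanSpace ℂ n := Matrix.toEuclideanLin M with hT
    have hmem : (WithLp.equiv 2 (n → ℂ)).symm Ψ ∈ LinearMap.range T := by
      rw [← Submodule.orthogonal_orthogonal (LinearMap.range T)]
      refine (Submodule.mem_orthogonal _ _).mpr ?_
      intro u hu
      -- hu : u ∈ (range T)ᗮ
      have hadj : LinearMap.adjoint T u = 0 := by
        have h1 : ∀ x : EuclideanSpace ℂ n, inner ℂ (LinearMap.adjoint T u) x = (0 : ℂ) := by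
          intro x
          rw [LinearMap.adjoint_inner_left]
          exact inner_eq_zero_symm.mp ((Submodule.mem_orthogonal _ _).mp hu (T x)
            (LinearMap.mem_range_self T x))
        have := h1 (LinearMap.adjoint T u)
        rwa [inner_self_eq_zero] at this
      have hker : Mᴴ.mulVec (WithLp.equiv 2 (n → ℂ) u) = 0 := by
        have : Matrix.toEuclideanLin Mᴴ u = 0 := by
          rw [Matrix.toEuclideanLin_conjTranspose_eq_adjoint, ← hT, hadj]
        have := congrArg (WithLp.equiv 2 (n → ℂ)) this
        simpa [Matrix.toEuclideanLin_apply] using this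
      have h0 := h _ hker
      -- goal : inner u ((WithLp.equiv 2 (n → ℂ)).symm Ψ) = 0
      rw [PiLp.inner_apply]
      rw [← h0]
      refine Finset.sum_congr rfl fun i _ => ?_
      simp [RCLike.inner_apply, mul_comm]
    obtain ⟨X, hX⟩ := hmem
    refine ⟨WithLp.equiv 2 (n → ℂ) X, ?_⟩
    have := congrArg (WithLp.equiv 2 (n → ℂ)) hX
    simpa [hT, Matrix.toEuclideanLin_apply] using this

/-- Kernel of the adjoint of the Bérenger split symbol and range of the split symbol:
`Ker L̃₁(τ,ξ)* = {(Φ,…,Φ) : Φ ∈ Ker L₁(τ,ξ)*}` and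
`Range L̃₁(τ,ξ) = {(Ψ₁,…,Ψ_d) : ⟨ΣΨⱼ, Φ⟩ = 0 ∀ Φ ∈ Ker L₁(τ,ξ)*}`. -/
theorem berenger_adjoint_kernel_and_range (N d : ℕ)
    (A : Fin d → Matrix (Fin N) (Fin N) ℂ)
    (τ : ℂ) (hτ : τ ≠ 0) (ξ : Fin d → ℂ)
    (L1 : Matrix (Fin N) (Fin N) ℂ)
    (hL1 : L1 = τ • (1 : Matrix (Fin N) (Fin N) ℂ) + ∑ l, ξ l • A l)
    (hchar : L1.det = 0)
    (tL1 : Matrix (Fin d × Fin N) (Fin d × Fin N) ℂ)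
    (htL1 : tL1 = Matrix.of fun p q : Fin d × Fin N =>
        ξ p.1 * A p.1 p.2 q.2 + if p = q then τ else 0) :
    (∀ Ψ : Fin d × Fin N → ℂ,
        tL1ᴴ.mulVec Ψ = 0 ↔
          ∃ Φ : Fin N → ℂ, L1ᴴ.mulVec Φ = 0 ∧ ∀ j a, Ψ (j, a) = Φ a)
    ∧ (∀ Ψ : Fin d × Fin N → ℂ,
        (∃ X, tL1.mulVec X = Ψ) ↔
          ∀ Φ : Fin N → ℂ, L1ᴴ.mulVec Φ = 0 →
            ∑ a, (∑ j, Ψ (j, a)) * star (Φ a) = 0) := by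
  -- entry formulas
  have htentry : ∀ (Ψ : Fin d × Fin N → ℂ) (l : Fin d) (a : Fin N),
      (tL1ᴴ.mulVec Ψ) (l, a)
        = star τ * Ψ (l, a) + ∑ p : Fin d × Fin N, star (ξ p.1 * A p.1 p.2 a) * Ψ p := by
    intro Ψ l a
    simp only [Matrix.mulVec, dotProduct, Matrix.conjTranspose_apply, htL1,
      Matrix.of_apply, star_add, add_mul]
    rw [Finset.sum_add_distrib, add_comm]
    congr 1
    simp [apply_ite (star : ℂ → ℂ), ite_mul, Finset.sum_ite_eq']
  have hLentry : ∀ (Φ : Fin N → ℂ) (a : Fin N),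
      (L1ᴴ.mulVec Φ) a
        = star τ * Φ a + ∑ p : Fin d × Fin N, star (ξ p.1 * A p.1 p.2 a) * Φ p.2 := by
    intro Φ a
    simp only [Matrix.mulVec, dotProduct, Matrix.conjTranspose_apply, hL1,
      Matrix.add_apply, Matrix.smul_apply, Matrix.one_apply, Matrix.sum_apply, smul_eq_mul,
      mul_ite, mul_one, mul_zero, star_add, apply_ite, star_zero, add_mul, ite_mul, zero_mul,
      Finset.sum_add_distrib, star_sum]
    rw [Finset.sum_ite_eq' Finset.univ a (fun b => star τ * Φ b)]
    simp only [Finset.mem_univ, if_true]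
    congr 1
    rw [Fintype.sum_prod_type, Finset.sum_comm]
    simp [Finset.sum_mul]
  have part1 : ∀ Ψ : Fin d × Fin N → ℂ,
      tL1ᴴ.mulVec Ψ = 0 ↔
        ∃ Φ : Fin N → ℂ, L1ᴴ.mulVec Φ = 0 ∧ ∀ j a, Ψ (j, a) = Φ a := by
    intro Ψ
    constructor
    · intro h
      have heq : ∀ (l : Fin d) (a : Fin N),
          star τ * Ψ (l, a) + ∑ p : Fin d × Fin N, star (ξ p.1 * A p.1 p.2 a) * Ψ p = 0 := by
        intro l a
        rw [← htentry Ψ l a, h]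
        rfl
      rcases Nat.eq_zero_or_pos d with hd | hd
      · -- d = 0 : get any kernel vector of L1ᴴ
        have hdet : (L1ᴴ).det = 0 := by
          rw [Matrix.det_conjTranspose, hchar, star_zero]
        obtain ⟨Φ, -, hΦ⟩ := Matrix.exists_mulVec_eq_zero_iff.mpr hdet
        exact ⟨Φ, hΦ, fun j => absurd j.2 (by omega)⟩
      · set j0 : Fin d := ⟨0, hd⟩
        have hconst : ∀ (j : Fin d) (a : Fin N), Ψ (j, a) = Ψ (j0, a) := by
          intro j a
          have h1 := heq j a
          have h2 := heq j0 a
          have : star τ * Ψ (j, a) = star τ * Ψ (j0, a) := by linear_combination h1 - h2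
          exact mul_left_cancel₀ (star_ne_zero.mpr hτ) this
        refine ⟨fun a => Ψ (j0, a), ?_, fun j a => hconst j a⟩
        funext a
        have hs : ∑ p : Fin d × Fin N, star (ξ p.1 * A p.1 p.2 a) * Ψ (j0, p.2)
            = ∑ p : Fin d × Fin N, star (ξ p.1 * A p.1 p.2 a) * Ψ p :=
          Finset.sum_congr rfl fun p _ => by
            rw [show Ψ (j0, p.2) = Ψ p from (hconst p.1 p.2).symm.trans (by rw [Prod.mk.eta])]
        simp only [Pi.zero_apply]
        rw [hLentry, hs]
        exact heq j0 a
    · rintro ⟨Φ, hΦ, hc⟩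
      funext p
      obtain ⟨l, a⟩ := p
      have : (tL1ᴴ.mulVec Ψ) (l, a) = (L1ᴴ.mulVec Φ) a := by
        rw [htentry, hLentry, hc l a]
        congr 1
        exact Finset.sum_congr rfl fun p _ => by rw [hc p.1 p.2]
      rw [hΦ] at this
      simpa using this
  refine ⟨part1, ?_⟩
  intro Ψ
  rw [aux_range_mulVec_iff]
  constructor
  · intro h Φ hΦ
    have ht : tL1ᴴ.mulVec (fun p : Fin d × Fin N => Φ p.2) = 0 :=
      (part1 _).mpr ⟨Φ, hΦ, fun j a => rfl⟩
    have h0 := h _ ht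
    have hsum : ∑ a, (∑ j, Ψ (j, a)) * star (Φ a)
        = ∑ p : Fin d × Fin N, Ψ p * star (Φ p.2) := by
      rw [Fintype.sum_prod_type, Finset.sum_comm]
      simp [Finset.sum_mul]
    rw [hsum]
    exact h0
  · intro h Φt hΦt
    obtain ⟨Φ, hΦ, hc⟩ := (part1 _).mp hΦt
    have h0 := h Φ hΦ
    have hsum : ∑ p : Fin d × Fin N, Ψ p * star (Φt p)
        = ∑ a, (∑ j, Ψ (j, a)) * star (Φ a) := by
      rw [Fintype.sum_prod_type, Finset.sum_comm]
      simp only [Finset.sum_mul]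
      exact Finset.sum_congr rfl fun a _ => Finset.sum_congr rfl fun j _ => by rw [hc j a]
    rw [hsum]
    exact h0
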